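/- Let G = (V, V_E, E, w, v_I) be a weighted arena with maximum absolute weight W, and consider the mean-payoff MP(π) = liminf_{k→∞} (1/k)·∑_{i<k} w(π(i),π(i+1)). Let G' be the weighted arena obtained from G by adding: a new Eve vertex v_I' which becomes the initial vertex, with a weight-0 edge from v_I' to v_I and a weight-0 edge from v_I' to a new Adam vertex c; weight-0 edges from c to two new Adam vertices d₁ and d₂; a self-loop of weight W+1 on d₁; and a self-loop of weight −3W−2 on d₂. Then aVal(G) = W + 1 − Reg(G'), where aVal(G) is the antagonistic value of G under MP and Reg(G') is the regret of G' under MP with both players unrestricted. -/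

import Mathlib

open Filter
open scoped Classical

/-- A weighted arena `(V, V_∃, E, w, v_I)`: `VE` is the set of vertices owned
by Eve (the rest belong to Adam), `E` is the edge relation, `w` the weight
function (only relevant on edges), and `init` the initial vertex. -/
structure Arena (V : Type) where
  VE : Set V
  E : V → V → Prop
  w : V → V → ℝ
  init : V

namespace Arena

variable {V : Type} (A : Arena V)

/-- The arena is total: every vertex has an outgoing edge. -/
def Total : Prop := ∀ v, ∃ u, A.E v u

/-- `l` is a finite `E`-path from the initial vertex ending in `v`. -/
def IsHist (l : List V) (v : V) : Prop :=
  l.Chain' A.E ∧ l.head? = some A.init ∧ l.getLast? = some v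

/-- A strategy for Eve: on every history ending in a vertex of Eve it picks a
successor of that vertex. -/
def EveStrat (σ : List V → V) : Prop :=
  ∀ l v, A.IsHist l v → v ∈ A.VE → A.E v (σ l)

/-- A strategy for Adam: on every history ending in a vertex of Adam it picks
a successor of that vertex. -/
def AdamStrat (τ : List V → V) : Prop :=
  ∀ l v, A.IsHist l v → v ∉ A.VE → A.E v (τ l)

/-- The prefixes (histories) of the unique play consistent with `σ` and `τ`. -/
noncomputable def hist (σ τ : List V → V) : ℕ → List V := fun n =>
  Nat.rec [A.init]
    (fun _ l => l ++ [if l.getLastD A.init ∈ A.VE then σ l else τ l]) n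

/-- The unique play consistent with `σ` and `τ`. -/
noncomputable def play (σ τ : List V → V) (n : ℕ) : V :=
  (A.hist σ τ n).getLastD A.init

/-- The `Inf` payoff of a play: the infimum of the weights seen. -/
noncomputable def InfVal (π : ℕ → V) : ℝ := ⨅ i : ℕ, A.w (π i) (π (i + 1))

/-- The `Sup` payoff of a play: the supremum of the weights seen. -/
noncomputable def SupVal (π : ℕ → V) : ℝ := ⨆ i : ℕ, A.w (π i) (π (i + 1))

/-- The `LimInf` payoff of a play. -/
noncomputable def LimInfVal (π : ℕ → V) : ℝ :=
  Filter.liminf (fun i : ℕ => A.w (π i) (π (i + 1))) atTop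

/-- The `LimSup` payoff of a play. -/
noncomputable def LimSupVal (π : ℕ → V) : ℝ :=
  Filter.limsup (fun i : ℕ => A.w (π i) (π (i + 1))) atTop

/-- The mean-payoff (defined with `liminf`) of a play. -/
noncomputable def MPVal (π : ℕ → V) : ℝ :=
  Filter.liminf
    (fun k : ℕ => (∑ i ∈ Finset.range k, A.w (π i) (π (i + 1))) / k) atTop

/-- The mean-payoff (defined with `limsup`) of a play. -/
noncomputable def MPBarVal (π : ℕ → V) : ℝ :=
  Filter.limsup
    (fun k : ℕ => (∑ i ∈ Finset.range k, A.w (π i) (π (i + 1))) / k) atTop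

/-- The regret of the arena w.r.t. a payoff `val`, where Eve's strategies are
restricted by `PE` and Adam's by `PA`. -/
noncomputable def regretPP (val : (ℕ → V) → ℝ)
    (PE PA : (List V → V) → Prop) : ℝ :=
  ⨅ σ : {σ : List V → V // A.EveStrat σ ∧ PE σ},
    ⨆ τ : {τ : List V → V // A.AdamStrat τ ∧ PA τ},
      ((⨆ σ' : {σ' : List V → V // A.EveStrat σ' ∧ PE σ'},
          val (A.play σ'.1 τ.1)) - val (A.play σ.1 τ.1))

/-- The regret of the arena w.r.t. a payoff `val`, both players unrestricted. -/
noncomputable def regret (val : (ℕ → V) → ℝ) : ℝ :=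
  A.regretPP val (fun _ => True) (fun _ => True)

/-- The antagonistic value. -/
noncomputable def aVal (val : (ℕ → V) → ℝ) : ℝ :=
  ⨆ σ : {σ : List V → V // A.EveStrat σ},
    ⨅ τ : {τ : List V → V // A.AdamStrat τ}, val (A.play σ.1 τ.1)

/-- The cooperative value. -/
noncomputable def cVal (val : (ℕ → V) → ℝ) : ℝ :=
  ⨆ σ : {σ : List V → V // A.EveStrat σ},
    ⨆ τ : {τ : List V → V // A.AdamStrat τ}, val (A.play σ.1 τ.1)

/-- The same arena with the initial vertex moved to `v`. -/
def withInit (v : V) : Arena V := { A with init := v }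

end Arena

/-- The arena `G'` of Lemma 3: `G` extended with a new initial Eve vertex
`v_I' = Sum.inr 0` having weight-0 edges to the old initial vertex and to a
new Adam vertex `c = Sum.inr 1`, which has weight-0 edges to two new Adam
vertices `d₁ = Sum.inr 2` (self-loop of weight `W + 1`) and `d₂ = Sum.inr 3`
(self-loop of weight `-3W - 2`). -/
def primeArena {V : Type} (A : Arena V) (W : ℝ) : Arena (V ⊕ Fin 4) where
  VE := {p | (∃ v ∈ A.VE, p = Sum.inl v) ∨ p = Sum.inr 0}
  E := fun p q =>
    (∃ u v, A.E u v ∧ p = Sum.inl u ∧ q = Sum.inl v) ∨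
    (p = Sum.inr 0 ∧ (q = Sum.inl A.init ∨ q = Sum.inr 1)) ∨
    (p = Sum.inr 1 ∧ (q = Sum.inr 2 ∨ q = Sum.inr 3)) ∨
    (p = Sum.inr 2 ∧ q = Sum.inr 2) ∨
    (p = Sum.inr 3 ∧ q = Sum.inr 3)
  w := fun p q =>
    match p, q with
    | Sum.inl u, Sum.inl v => A.w u v
    | Sum.inr i, Sum.inr j =>
        if i = 2 ∧ j = 2 then W + 1
        else if i = 3 ∧ j = 3 then -3 * W - 2 else 0
    | _, _ => 0
  init := Sum.inr 0


/- ### Auxiliary material for the proof ### -/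


namespace MPaux

noncomputable def avg (a : ℕ → ℝ) (k : ℕ) : ℝ := (∑ i ∈ Finset.range k, a i) / k

lemma abs_sum_le {a : ℕ → ℝ} {C : ℝ} (h : ∀ i, |a i| ≤ C) (k : ℕ) :
    |∑ i ∈ Finset.range k, a i| ≤ k * C := by
  calc |∑ i ∈ Finset.range k, a i| ≤ ∑ i ∈ Finset.range k, |a i| :=
        Finset.abs_sum_le_sum_abs _ _
    _ ≤ ∑ _i ∈ Finset.range k, C := Finset.sum_le_sum (fun i _ => h i)
    _ = k * C := by simp [mul_comm]

lemma abs_avg_le {a : ℕ → ℝ} {C : ℝ} (hC : 0 ≤ C) (h : ∀ i, |a i| ≤ C) (k : ℕ) :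
    |avg a k| ≤ C := by
  rcases Nat.eq_zero_or_pos k with rfl | hk
  · simp [avg, hC]
  · have hk' : (0:ℝ) < k := by exact_mod_cast hk
    rw [avg, abs_div, abs_of_pos hk', div_le_iff₀ hk']
    calc |∑ i ∈ Finset.range k, a i| ≤ k * C := abs_sum_le h k
      _ = C * k := mul_comm _ _

lemma bddU {a : ℕ → ℝ} {C : ℝ} (hC : 0 ≤ C) (h : ∀ i, |a i| ≤ C) :
    IsBoundedUnder (· ≤ ·) atTop (avg a) :=
  isBoundedUnder_of ⟨C, fun k => (abs_le.1 (abs_avg_le hC h k)).2⟩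

lemma bddL {a : ℕ → ℝ} {C : ℝ} (hC : 0 ≤ C) (h : ∀ i, |a i| ≤ C) :
    IsBoundedUnder (· ≥ ·) atTop (avg a) :=
  isBoundedUnder_of ⟨-C, fun k => (abs_le.1 (abs_avg_le hC h k)).1⟩

lemma liminf_avg_le {a : ℕ → ℝ} {C : ℝ} (hC : 0 ≤ C) (h : ∀ i, |a i| ≤ C) :
    liminf (avg a) atTop ≤ C := by
  have := liminf_le_liminf (Eventually.of_forall fun k => (abs_le.1 (abs_avg_le hC h k)).2)
    (bddL hC h) (isBoundedUnder_const (α := ℝ)).isCoboundedUnder_ge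
  simpa using this

lemma neg_le_liminf_avg {a : ℕ → ℝ} {C : ℝ} (hC : 0 ≤ C) (h : ∀ i, |a i| ≤ C) :
    -C ≤ liminf (avg a) atTop := by
  have := liminf_le_liminf (Eventually.of_forall fun k => (abs_le.1 (abs_avg_le hC h k)).1)
    (isBoundedUnder_const (α := ℝ)) (bddU hC h).isCoboundedUnder_ge
  simpa using this

lemma tendsto_avg_of_eventually_const {a : ℕ → ℝ} {c : ℝ} {N : ℕ}
    (h : ∀ i, N ≤ i → a i = c) : Tendsto (avg a) atTop (nhds c) := by
  set D : ℝ := (∑ i ∈ Finset.range N, a i) - N * c with hD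
  have key : ∀ k, N ≤ k → 1 ≤ k → avg a k = c + D * (k : ℝ)⁻¹ := by
    intro k hNk hk1
    have hsum : ∑ i ∈ Finset.range k, a i = D + k * c := by
      have : ∑ i ∈ Finset.range k, a i
          = ∑ i ∈ Finset.range N, a i + ∑ i ∈ Finset.Ico N k, a i := by
        rw [Finset.range_eq_Ico, ← Finset.sum_Ico_consecutive _ (Nat.zero_le N) hNk,
          ← Finset.range_eq_Ico]
      rw [this, Finset.sum_congr rfl (fun i hi => h i (Finset.mem_Ico.1 hi).1)]
      simp only [Finset.sum_const, Nat.card_Ico, nsmul_eq_mul]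
      have : ((k - N : ℕ) : ℝ) = (k : ℝ) - N := by
        rw [Nat.cast_sub hNk]
      rw [this, hD]; ring
    have hk' : (k : ℝ) ≠ 0 := by
      have : (0:ℝ) < k := by exact_mod_cast hk1
      linarith
    rw [avg, hsum]
    field_simp
    ring
  have h2 : Tendsto (fun k : ℕ => c + D * (k : ℝ)⁻¹) atTop (nhds c) := by
    have : Tendsto (fun k : ℕ => (k : ℝ)⁻¹) atTop (nhds 0) :=
      tendsto_inv_atTop_nhds_zero_nat
    have := (tendsto_const_nhds (x := c)).add ((tendsto_const_nhds (x := D)).mul this)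
    simpa using this
  apply h2.congr'
  filter_upwards [eventually_ge_atTop N, eventually_ge_atTop 1] with k h1 h2
  exact (key k h1 h2).symm

lemma liminf_avg_of_eventually_const {a : ℕ → ℝ} {c : ℝ} {N : ℕ}
    (h : ∀ i, N ≤ i → a i = c) : liminf (avg a) atTop = c :=
  (tendsto_avg_of_eventually_const h).liminf_eq

lemma liminf_le_of_close {f g : ℕ → ℝ} {C : ℝ} (hC : 0 ≤ C)
    (hf : ∀ k, |f k| ≤ C) (hg : ∀ k, |g k| ≤ C)
    (h : Tendsto (fun k => f k - g k) atTop (nhds 0)) :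
    liminf f atTop ≤ liminf g atTop := by
  apply le_of_forall_pos_le_add
  intro ε hε
  have hev : ∀ᶠ k in atTop, f k ≤ g k + ε := by
    filter_upwards [NormedAddCommGroup.tendsto_nhds_zero.mp h ε hε] with k hk
    have := (abs_lt.1 (by simpa using hk)).2
    linarith
  have hfb : IsBoundedUnder (· ≥ ·) atTop f :=
    isBoundedUnder_of ⟨-C, fun k => (abs_le.1 (hf k)).1⟩
  have hgU : IsBoundedUnder (· ≤ ·) atTop g :=
    isBoundedUnder_of ⟨C, fun k => (abs_le.1 (hg k)).2⟩
  have hgL : IsBoundedUnder (· ≥ ·) atTop g :=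
    isBoundedUnder_of ⟨-C, fun k => (abs_le.1 (hg k)).1⟩
  have hgeU : IsBoundedUnder (· ≤ ·) atTop (fun k => g k + ε) :=
    isBoundedUnder_of ⟨C + ε, fun k => by have := (abs_le.1 (hg k)).2; linarith⟩
  calc liminf f atTop ≤ liminf (fun k => g k + ε) atTop :=
        liminf_le_liminf hev hfb hgeU.isCoboundedUnder_ge
    _ = liminf g atTop + ε := liminf_add_const atTop g ε hgU.isCoboundedUnder_ge hgL

lemma liminf_eq_of_close {f g : ℕ → ℝ} {C : ℝ} (hC : 0 ≤ C)
    (hf : ∀ k, |f k| ≤ C) (hg : ∀ k, |g k| ≤ C)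
    (h : Tendsto (fun k => f k - g k) atTop (nhds 0)) :
    liminf f atTop = liminf g atTop :=
  le_antisymm (liminf_le_of_close hC hf hg h)
    (liminf_le_of_close hC hg hf (by simpa using h.neg))

lemma liminf_avg_shift {a a' : ℕ → ℝ} {C : ℝ} (hC : 0 ≤ C)
    (h0 : a' 0 = 0) (hs : ∀ i, a' (i + 1) = a i) (hb : ∀ i, |a i| ≤ C) :
    liminf (avg a') atTop = liminf (avg a) atTop := by
  have hb' : ∀ i, |a' i| ≤ C := by
    intro i; cases i with
    | zero => simpa [h0] using hC
    | succ n => rw [hs]; exact hb n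
  have hsum : ∀ k, ∑ i ∈ Finset.range (k + 1), a' i = ∑ i ∈ Finset.range k, a i := by
    intro k
    rw [Finset.sum_range_succ']
    simp [h0, hs]
  have hshift : liminf (avg a') atTop = liminf (fun k => avg a' (k + 1)) atTop :=
    (liminf_nat_add (avg a') 1).symm
  rw [hshift]
  apply liminf_eq_of_close hC (fun k => abs_avg_le hC hb' (k + 1)) (fun k => abs_avg_le hC hb k)
  have key : ∀ k : ℕ, 1 ≤ k →
      |avg a' (k + 1) - avg a k| ≤ C * (k : ℝ)⁻¹ := by
    intro k hk
    have hk0 : (0:ℝ) < k := by exact_mod_cast hk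
    have hk1 : (0:ℝ) < (k:ℝ) + 1 := by linarith
    have : avg a' (k + 1) - avg a k
        = (∑ i ∈ Finset.range k, a i) * ((( k : ℝ) + 1)⁻¹ - (k : ℝ)⁻¹) := by
      rw [avg, avg, hsum k]
      push_cast
      ring
    rw [this, abs_mul]
    have h1 : |(((k : ℝ) + 1)⁻¹ - (k : ℝ)⁻¹)| = (k:ℝ)⁻¹ - ((k:ℝ)+1)⁻¹ := by
      rw [abs_sub_comm, abs_of_nonneg]
      have := one_div_le_one_div_of_le hk0 (by linarith : (k:ℝ) ≤ (k:ℝ)+1)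
      simpa [one_div] using sub_nonneg.2 this
    rw [h1]
    have h2 : (k:ℝ)⁻¹ - ((k:ℝ)+1)⁻¹ = ((k:ℝ) * ((k:ℝ)+1))⁻¹ := by
      field_simp
      ring
    rw [h2]
    calc |∑ i ∈ Finset.range k, a i| * ((k:ℝ) * ((k:ℝ)+1))⁻¹
        ≤ (k * C) * ((k:ℝ) * ((k:ℝ)+1))⁻¹ := by
          apply mul_le_mul_of_nonneg_right (abs_sum_le hb k); positivity
      _ ≤ C * (k:ℝ)⁻¹ := by
          rw [mul_inv]
          rw [show (k:ℝ) * C * ((k:ℝ)⁻¹ * ((k:ℝ)+1)⁻¹) = C * ((k:ℝ)+1)⁻¹ * ((k:ℝ) * (k:ℝ)⁻¹) by ring,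
            mul_inv_cancel₀ (ne_of_gt hk0)]
          rw [mul_one]
          apply mul_le_mul_of_nonneg_left _ hC
          exact inv_anti₀ hk0 (by linarith)
  -- conclude tendsto 0
  have hten : Tendsto (fun k : ℕ => C * (k : ℝ)⁻¹) atTop (nhds 0) := by
    have := (tendsto_const_nhds (x := C)).mul tendsto_inv_atTop_nhds_zero_nat
    simpa using this
  rw [← tendsto_sub_nhds_zero_iff] at hten
  apply squeeze_zero_norm' _ (by simpa using ((tendsto_const_nhds (x := C)).mul tendsto_inv_atTop_nhds_zero_nat))
  filter_upwards [eventually_ge_atTop 1] with k hk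
  simpa using key k hk

end MPaux

namespace Arena
variable {V : Type} (A : Arena V)
variable {σ τ : List V → V}

noncomputable def anyStrat (h : A.Total) : List V → V :=
  fun l => (h (l.getLastD A.init)).choose

lemma anyStrat_edge (h : A.Total) (l : List V) :
    A.E (l.getLastD A.init) (A.anyStrat h l) := (h _).choose_spec

noncomputable def force (h : A.Total) (s : List V → V) : List V → V :=
  fun l => if A.E (l.getLastD A.init) (s l) then s l else A.anyStrat h l

lemma force_edge (h : A.Total) (s : List V → V) (l : List V) :
    A.E (l.getLastD A.init) (A.force h s l) := by
  unfold force
  split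
  · assumption
  · exact A.anyStrat_edge h l

lemma force_eq (h : A.Total) {s : List V → V} {l : List V}
    (hl : A.E (l.getLastD A.init) (s l)) : A.force h s l = s l := if_pos hl

lemma getLastD_eq_of_isHist {l : List V} {v : V} (hl : A.IsHist l v) :
    l.getLastD A.init = v := by
  rw [List.getLastD_eq_getLast?, hl.2.2]; rfl

lemma evestrat_force (h : A.Total) (s : List V → V) : A.EveStrat (A.force h s) := by
  intro l v hl _
  have := A.force_edge h s l
  rwa [A.getLastD_eq_of_isHist hl] at this

lemma adamstrat_force (h : A.Total) (s : List V → V) : A.AdamStrat (A.force h s) := by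
  intro l v hl _
  have := A.force_edge h s l
  rwa [A.getLastD_eq_of_isHist hl] at this

lemma evestrat_any (h : A.Total) : A.EveStrat (A.anyStrat h) := by
  intro l v hl _
  have := A.anyStrat_edge h l
  rwa [A.getLastD_eq_of_isHist hl] at this

lemma adamstrat_any (h : A.Total) : A.AdamStrat (A.anyStrat h) := by
  intro l v hl _
  have := A.anyStrat_edge h l
  rwa [A.getLastD_eq_of_isHist hl] at this

variable {σ τ : List V → V}

lemma hist_zero : A.hist σ τ 0 = [A.init] := rfl

lemma hist_succ (n : ℕ) : A.hist σ τ (n + 1) =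
    A.hist σ τ n ++ [if A.play σ τ n ∈ A.VE then σ (A.hist σ τ n) else τ (A.hist σ τ n)] := rfl

lemma play_zero : A.play σ τ 0 = A.init := rfl

lemma hist_ne_nil (n : ℕ) : A.hist σ τ n ≠ [] := by
  cases n with
  | zero => simp [hist_zero]
  | succ n => rw [hist_succ]; simp

lemma hist_getLast? (n : ℕ) : (A.hist σ τ n).getLast? = some (A.play σ τ n) := by
  have h := A.hist_ne_nil (σ := σ) (τ := τ) n
  rw [play, List.getLastD_eq_getLast?]
  cases hl : (A.hist σ τ n).getLast? with
  | none => exact absurd (List.getLast?_eq_none_iff.mp hl) h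
  | some a => rfl

lemma hist_head? (n : ℕ) : (A.hist σ τ n).head? = some A.init := by
  induction n with
  | zero => rfl
  | succ n ih =>
    rw [hist_succ, List.head?_append]
    simp [ih]

lemma play_succ (n : ℕ) : A.play σ τ (n + 1) =
    if A.play σ τ n ∈ A.VE then σ (A.hist σ τ n) else τ (A.hist σ τ n) := by
  rw [play, hist_succ, List.getLastD_concat]

lemma isHist_hist (hσ : A.EveStrat σ) (hτ : A.AdamStrat τ) (n : ℕ) :
    A.IsHist (A.hist σ τ n) (A.play σ τ n) := by
  induction n with
  | zero => exact ⟨List.isChain_singleton _, rfl, rfl⟩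
  | succ n ih =>
    refine ⟨?_, A.hist_head? (n + 1), A.hist_getLast? (n + 1)⟩
    rw [hist_succ, List.Chain', List.isChain_append]
    refine ⟨ih.1, List.isChain_singleton _, ?_⟩
    intro x hx y hy
    rw [A.hist_getLast?] at hx
    simp only [List.head?_cons, Option.mem_def, Option.some.injEq] at hx hy
    subst hx; subst hy
    split
    · exact hσ _ _ ih ‹_›
    · exact hτ _ _ ih ‹_›

lemma edge_play (hσ : A.EveStrat σ) (hτ : A.AdamStrat τ) (n : ℕ) :
    A.E (A.play σ τ n) (A.play σ τ (n + 1)) := by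
  rw [play_succ]
  split
  · exact hσ _ _ (A.isHist_hist hσ hτ n) ‹_›
  · exact hτ _ _ (A.isHist_hist hσ hτ n) ‹_›


end Arena

section PrimeAux

open Arena in
/-- Mean-payoff bounds from pointwise weight bounds along the play. -/
lemma Arena.MPVal_le_of_bound {V : Type} (A : Arena V) {π : ℕ → V} {C : ℝ} (hC : 0 ≤ C)
    (h : ∀ i, |A.w (π i) (π (i + 1))| ≤ C) : A.MPVal π ≤ C :=
  MPaux.liminf_avg_le hC h

lemma Arena.le_MPVal_of_bound {V : Type} (A : Arena V) {π : ℕ → V} {C : ℝ} (hC : 0 ≤ C)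
    (h : ∀ i, |A.w (π i) (π (i + 1))| ≤ C) : -C ≤ A.MPVal π :=
  MPaux.neg_le_liminf_avg hC h

variable {V : Type} {A : Arena V} {W : ℝ}

lemma prime_total (h : A.Total) : (primeArena A W).Total := by
  rintro (u | i)
  · obtain ⟨v, hv⟩ := h u
    exact ⟨Sum.inl v, Or.inl ⟨u, v, hv, rfl, rfl⟩⟩
  · fin_cases i
    · exact ⟨Sum.inr 1, Or.inr (Or.inl ⟨rfl, Or.inr rfl⟩)⟩
    · exact ⟨Sum.inr 2, Or.inr (Or.inr (Or.inl ⟨rfl, Or.inl rfl⟩))⟩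
    · exact ⟨Sum.inr 2, Or.inr (Or.inr (Or.inr (Or.inl ⟨rfl, rfl⟩)))⟩
    · exact ⟨Sum.inr 3, Or.inr (Or.inr (Or.inr (Or.inr ⟨rfl, rfl⟩)))⟩

lemma mem_VE_iff (p : V ⊕ Fin 4) :
    p ∈ (primeArena A W).VE ↔ ((∃ v ∈ A.VE, p = Sum.inl v) ∨ p = Sum.inr 0) := Iff.rfl

lemma mem_VE_inl {v : V} : (Sum.inl v : V ⊕ Fin 4) ∈ (primeArena A W).VE ↔ v ∈ A.VE := by
  rw [mem_VE_iff]
  simp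

lemma mem_VE_inr0 : (Sum.inr 0 : V ⊕ Fin 4) ∈ (primeArena A W).VE := Or.inr rfl

lemma not_mem_VE_inr {i : Fin 4} (hi : i ≠ 0) :
    (Sum.inr i : V ⊕ Fin 4) ∉ (primeArena A W).VE := by
  rw [mem_VE_iff]
  simp [hi]

lemma edge_inl {u : V} {q : V ⊕ Fin 4} :
    (primeArena A W).E (Sum.inl u) q ↔ ∃ v, A.E u v ∧ q = Sum.inl v := by
  constructor
  · rintro (⟨u', v', h, hu, hq⟩ | ⟨h, _⟩ | ⟨h, _⟩ | ⟨h, _⟩ | ⟨h, _⟩) <;>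
      first
        | (cases hu; exact ⟨v', h, hq⟩)
        | exact absurd h (by simp)
  · rintro ⟨v, h, rfl⟩
    exact Or.inl ⟨u, v, h, rfl, rfl⟩

lemma edge_inr {i : Fin 4} {q : V ⊕ Fin 4} :
    (primeArena A W).E (Sum.inr i) q ↔
      ((i = 0 ∧ (q = Sum.inl A.init ∨ q = Sum.inr 1)) ∨
       (i = 1 ∧ (q = Sum.inr 2 ∨ q = Sum.inr 3)) ∨
       (i = 2 ∧ q = Sum.inr 2) ∨ (i = 3 ∧ q = Sum.inr 3)) := by
  constructor
  · rintro (⟨u', v', _, hu, _⟩ | ⟨h, hq⟩ | ⟨h, hq⟩ | ⟨h, hq⟩ | ⟨h, hq⟩)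
    · exact absurd hu (by simp)
    · exact Or.inl ⟨by injection h, hq⟩
    · exact Or.inr (Or.inl ⟨by injection h, hq⟩)
    · exact Or.inr (Or.inr (Or.inl ⟨by injection h, hq⟩))
    · exact Or.inr (Or.inr (Or.inr ⟨by injection h, hq⟩))
  · rintro (⟨rfl, hq⟩ | ⟨rfl, hq⟩ | ⟨rfl, hq⟩ | ⟨rfl, hq⟩)
    · exact Or.inr (Or.inl ⟨rfl, hq⟩)
    · exact Or.inr (Or.inr (Or.inl ⟨rfl, hq⟩))
    · exact Or.inr (Or.inr (Or.inr (Or.inl ⟨rfl, hq⟩)))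
    · exact Or.inr (Or.inr (Or.inr (Or.inr ⟨rfl, hq⟩)))

lemma w_inl_inl (u v : V) : (primeArena A W).w (Sum.inl u) (Sum.inl v) = A.w u v := rfl

lemma w_inr_inl (i : Fin 4) (v : V) : (primeArena A W).w (Sum.inr i) (Sum.inl v) = 0 := rfl

lemma w_inr_inr (i j : Fin 4) : (primeArena A W).w (Sum.inr i) (Sum.inr j) =
    if i = 2 ∧ j = 2 then W + 1 else if i = 3 ∧ j = 3 then -3 * W - 2 else 0 := rfl

lemma isHist_lift {l : List V} {v : V} (hl : A.IsHist l v) :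
    (primeArena A W).IsHist (Sum.inr 0 :: l.map Sum.inl) (Sum.inl v) := by
  obtain ⟨hc, hh, hg⟩ := hl
  refine ⟨?_, rfl, ?_⟩
  · rw [List.Chain', List.isChain_cons]
    constructor
    · intro b hb
      rw [List.head?_map, hh] at hb
      simp only [Option.map_some, Option.mem_def, Option.some.injEq] at hb
      subst hb
      exact Or.inr (Or.inl ⟨rfl, Or.inl rfl⟩)
    · rw [List.isChain_map]
      exact hc.imp fun a b h => Or.inl ⟨a, b, h, rfl, rfl⟩
  · simp [List.getLast?_cons, List.getLast?_map, hg]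

/-- Projection of lists over `V ⊕ Fin 4` back to `V`. -/
def projL (l : List (V ⊕ Fin 4)) : List V := l.filterMap (Sum.elim some fun _ => none)

lemma projL_lift (m : List V) : projL (Sum.inr 0 :: m.map Sum.inl) = m := by
  simp [projL, List.filterMap_cons, List.filterMap_map, Function.comp]

lemma getLastD_lift {m : List V} {v : V} (hm : m.getLast? = some v) (a d : V ⊕ Fin 4) :
    (a :: m.map Sum.inl).getLastD d = Sum.inl v := by
  rw [List.getLastD_cons, List.getLastD_eq_getLast?, List.getLast?_map, hm]
  rfl

lemma prime_play_zero (σ τ : List (V ⊕ Fin 4) → V ⊕ Fin 4) :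
    (primeArena A W).play σ τ 0 = Sum.inr 0 := rfl

lemma prime_hist_zero (σ τ : List (V ⊕ Fin 4) → V ⊕ Fin 4) :
    (primeArena A W).hist σ τ 0 = [Sum.inr 0] := rfl

lemma prime_play_one (σ τ : List (V ⊕ Fin 4) → V ⊕ Fin 4) :
    (primeArena A W).play σ τ 1 = σ [Sum.inr 0] := by
  rw [Arena.play_succ, if_pos]
  · rfl
  · exact mem_VE_inr0

/-- The fundamental correspondence between plays in `G'` (when Eve moves to
`G` initially) and plays in `G`. -/
lemma lift_hist {σ' τ' : List (V ⊕ Fin 4) → V ⊕ Fin 4} {σG τG : List V → V}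
    (hσG : A.EveStrat σG) (hτG : A.AdamStrat τG)
    (h0 : σ' [Sum.inr 0] = Sum.inl A.init)
    (hE : ∀ n, A.play σG τG n ∈ A.VE →
      σ' (Sum.inr 0 :: (A.hist σG τG n).map Sum.inl) = Sum.inl (σG (A.hist σG τG n)))
    (hA : ∀ n, A.play σG τG n ∉ A.VE →
      τ' (Sum.inr 0 :: (A.hist σG τG n).map Sum.inl) = Sum.inl (τG (A.hist σG τG n))) :
    ∀ n, (primeArena A W).hist σ' τ' (n + 1) = Sum.inr 0 :: (A.hist σG τG n).map Sum.inl := by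
  intro n
  induction n with
  | zero =>
    rw [Arena.hist_succ, if_pos]
    · rw [prime_hist_zero]
      have : σ' ((primeArena A W).hist σ' τ' 0) = Sum.inl A.init := h0
      rw [prime_hist_zero] at this
      rw [this]
      rfl
    · exact mem_VE_inr0
  | succ n ih =>
    have hlast : (primeArena A W).play σ' τ' (n + 1) = Sum.inl (A.play σG τG n) := by
      rw [Arena.play, ih]
      exact getLastD_lift (A.hist_getLast? n) _ _
    rw [Arena.hist_succ, ih, hlast, A.hist_succ n]
    by_cases hmem : A.play σG τG n ∈ A.VE
    · rw [if_pos ((mem_VE_inl (W := W)).2 hmem), if_pos hmem, hE n hmem,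
        List.map_append]
      rfl
    · rw [if_neg (fun h => hmem ((mem_VE_inl (W := W)).1 h)), if_neg hmem, hA n hmem,
        List.map_append]
      rfl

lemma lift_play {σ' τ' : List (V ⊕ Fin 4) → V ⊕ Fin 4} {σG τG : List V → V}
    (hσG : A.EveStrat σG) (hτG : A.AdamStrat τG)
    (h0 : σ' [Sum.inr 0] = Sum.inl A.init)
    (hE : ∀ n, A.play σG τG n ∈ A.VE →
      σ' (Sum.inr 0 :: (A.hist σG τG n).map Sum.inl) = Sum.inl (σG (A.hist σG τG n)))
    (hA : ∀ n, A.play σG τG n ∉ A.VE →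
      τ' (Sum.inr 0 :: (A.hist σG τG n).map Sum.inl) = Sum.inl (τG (A.hist σG τG n))) :
    ∀ n, (primeArena A W).play σ' τ' (n + 1) = Sum.inl (A.play σG τG n) := by
  intro n
  rw [Arena.play, lift_hist hσG hτG h0 hE hA n]
  exact getLastD_lift (A.hist_getLast? n) _ _

/-- Mean-payoff of the lifted play equals the mean-payoff of the original. -/
lemma lift_MPVal (hW0 : 0 ≤ W) {π' : ℕ → V ⊕ Fin 4} {πG : ℕ → V}
    (hb : ∀ i, |A.w (πG i) (πG (i + 1))| ≤ W)
    (h0 : π' 0 = Sum.inr 0) (hs : ∀ n, π' (n + 1) = Sum.inl (πG n)) :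
    (primeArena A W).MPVal π' = A.MPVal πG := by
  have key : (primeArena A W).MPVal π' =
      Filter.liminf (MPaux.avg (fun i => (primeArena A W).w (π' i) (π' (i + 1)))) Filter.atTop :=
    rfl
  have key2 : A.MPVal πG =
      Filter.liminf (MPaux.avg (fun i => A.w (πG i) (πG (i + 1)))) Filter.atTop := rfl
  rw [key, key2]
  apply MPaux.liminf_avg_shift hW0 _ _ hb
  · rw [h0, hs 0]
    rfl
  · intro i
    rw [hs i, hs (i + 1)]
    rfl

/-! Case analysis of an arbitrary consistent play in `G'`. -/
lemma prime_play_cases (hW0 : 0 ≤ W) (hWb : ∀ u v, A.E u v → |A.w u v| ≤ W)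
    {σ τ : List (V ⊕ Fin 4) → V ⊕ Fin 4}
    (hσ : (primeArena A W).EveStrat σ) (hτ : (primeArena A W).AdamStrat τ) :
    ((primeArena A W).play σ τ 1 = Sum.inl A.init ∧
      -W ≤ (primeArena A W).MPVal ((primeArena A W).play σ τ) ∧
      (primeArena A W).MPVal ((primeArena A W).play σ τ) ≤ W) ∨
    ((primeArena A W).play σ τ 1 = Sum.inr 1 ∧ (primeArena A W).play σ τ 2 = Sum.inr 2 ∧
      (primeArena A W).MPVal ((primeArena A W).play σ τ) = W + 1) ∨
    ((primeArena A W).play σ τ 1 = Sum.inr 1 ∧ (primeArena A W).play σ τ 2 = Sum.inr 3 ∧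
      (primeArena A W).MPVal ((primeArena A W).play σ τ) = -3 * W - 2) := by
  set P := (primeArena A W).play σ τ with hP
  have hedge : ∀ n, (primeArena A W).E (P n) (P (n + 1)) :=
    (primeArena A W).edge_play hσ hτ
  have h0 : P 0 = Sum.inr 0 := rfl
  have h1 := hedge 0
  rw [h0, edge_inr] at h1
  have h1' : P 1 = Sum.inl A.init ∨ P 1 = Sum.inr 1 := by
    rcases h1 with ⟨_, h⟩ | ⟨h, _⟩ | ⟨h, _⟩ | ⟨h, _⟩
    · exact h
    all_goals exact absurd h (by decide)
  have hval : (primeArena A W).MPVal P =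
      Filter.liminf (MPaux.avg fun i => (primeArena A W).w (P i) (P (i + 1)))
        Filter.atTop := rfl
  rcases h1' with h1' | h1'
  · left
    refine ⟨h1', ?_⟩
    have hinl : ∀ n, ∃ u, P (n + 1) = Sum.inl u := by
      intro n
      induction n with
      | zero => exact ⟨A.init, h1'⟩
      | succ n ih =>
        obtain ⟨u, hu⟩ := ih
        have h := hedge (n + 1)
        rw [hu, edge_inl] at h
        obtain ⟨v, _, hv⟩ := h
        exact ⟨v, hv⟩
    have hb : ∀ i, |(primeArena A W).w (P i) (P (i + 1))| ≤ W := by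
      intro i
      cases i with
      | zero =>
        obtain ⟨u, hu⟩ := hinl 0
        rw [h0, hu, w_inr_inl]
        simpa using hW0
      | succ n =>
        obtain ⟨u, hu⟩ := hinl n
        obtain ⟨v, hv⟩ := hinl (n + 1)
        have he := hedge (n + 1)
        rw [hu, hv, edge_inl] at he
        obtain ⟨v', hE', heq⟩ := he
        injection heq with heq
        subst heq
        rw [hu, hv, w_inl_inl]
        exact hWb _ _ hE'
    exact ⟨(primeArena A W).le_MPVal_of_bound hW0 hb,
      (primeArena A W).MPVal_le_of_bound hW0 hb⟩
  · have h2 := hedge 1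
    rw [h1', edge_inr] at h2
    have h2' : P 2 = Sum.inr 2 ∨ P 2 = Sum.inr 3 := by
      rcases h2 with ⟨h, _⟩ | ⟨_, h⟩ | ⟨h, _⟩ | ⟨h, _⟩
      · exact absurd h (by decide)
      · exact h
      all_goals exact absurd h (by decide)
    rcases h2' with h2' | h2'
    · right; left
      refine ⟨h1', h2', ?_⟩
      have hconst : ∀ n, P (n + 2) = Sum.inr 2 := by
        intro n
        induction n with
        | zero => exact h2'
        | succ n ih =>
          have h := hedge (n + 2)
          rw [ih, edge_inr] at h
          rcases h with ⟨h, _⟩ | ⟨h, _⟩ | ⟨_, h⟩ | ⟨h, _⟩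
          · exact absurd h (by decide)
          · exact absurd h (by decide)
          · exact h
          · exact absurd h (by decide)
      have hev : ∀ i, 2 ≤ i → (primeArena A W).w (P i) (P (i + 1)) = W + 1 := by
        intro i hi
        obtain ⟨n, rfl⟩ : ∃ n, i = n + 2 := ⟨i - 2, by omega⟩
        rw [hconst n, show n + 2 + 1 = (n + 1) + 2 from rfl, hconst (n + 1), w_inr_inr,
          if_pos ⟨rfl, rfl⟩]
      rw [hval]
      exact MPaux.liminf_avg_of_eventually_const hev
    · right; right
      refine ⟨h1', h2', ?_⟩
      have hconst : ∀ n, P (n + 2) = Sum.inr 3 := by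
        intro n
        induction n with
        | zero => exact h2'
        | succ n ih =>
          have h := hedge (n + 2)
          rw [ih, edge_inr] at h
          rcases h with ⟨h, _⟩ | ⟨h, _⟩ | ⟨h, _⟩ | ⟨_, h⟩
          · exact absurd h (by decide)
          · exact absurd h (by decide)
          · exact absurd h (by decide)
          · exact h
      have hev : ∀ i, 2 ≤ i → (primeArena A W).w (P i) (P (i + 1)) = -3 * W - 2 := by
        intro i hi
        obtain ⟨n, rfl⟩ : ∃ n, i = n + 2 := ⟨i - 2, by omega⟩
        rw [hconst n, show n + 2 + 1 = (n + 1) + 2 from rfl, hconst (n + 1), w_inr_inr,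
          if_neg (by decide), if_pos ⟨rfl, rfl⟩]
      rw [hval]
      exact MPaux.liminf_avg_of_eventually_const hev

/-! ### Strategy constructions -/

/-- Eve strategy in `G` obtained by projecting a strategy of `G'`. -/
noncomputable def projStratE (A : Arena V) (hT : A.Total)
    (σ' : List (V ⊕ Fin 4) → V ⊕ Fin 4) : List V → V := fun l =>
  match σ' (Sum.inr 0 :: l.map Sum.inl) with
  | Sum.inl v => v
  | Sum.inr _ => A.anyStrat hT l

lemma projStratE_spec {hT : A.Total} {σ' : List (V ⊕ Fin 4) → V ⊕ Fin 4}
    (hσ' : (primeArena A W).EveStrat σ') {l : List V} {v : V}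
    (hl : A.IsHist l v) (hv : v ∈ A.VE) :
    A.E v (projStratE A hT σ' l) ∧
      σ' (Sum.inr 0 :: l.map Sum.inl) = Sum.inl (projStratE A hT σ' l) := by
  have h1 := hσ' _ _ (isHist_lift (W := W) hl) ((mem_VE_inl (W := W)).2 hv)
  rw [edge_inl] at h1
  obtain ⟨v', hE', heq⟩ := h1
  have hval : projStratE A hT σ' l = v' := by
    unfold projStratE
    rw [heq]
  rw [hval]
  exact ⟨hE', heq⟩

lemma projStratE_evestrat (hT : A.Total) {σ' : List (V ⊕ Fin 4) → V ⊕ Fin 4}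
    (hσ' : (primeArena A W).EveStrat σ') : A.EveStrat (projStratE A hT σ') :=
  fun _ _ hl hv => (projStratE_spec hσ' hl hv).1

/-- Adam strategy in `G` obtained by projecting a strategy of `G'`. -/
noncomputable def projStratA (A : Arena V) (hT : A.Total)
    (τ' : List (V ⊕ Fin 4) → V ⊕ Fin 4) : List V → V := fun l =>
  match τ' (Sum.inr 0 :: l.map Sum.inl) with
  | Sum.inl v => v
  | Sum.inr _ => A.anyStrat hT l

lemma projStratA_spec {hT : A.Total} {τ' : List (V ⊕ Fin 4) → V ⊕ Fin 4}
    (hτ' : (primeArena A W).AdamStrat τ') {l : List V} {v : V}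
    (hl : A.IsHist l v) (hv : v ∉ A.VE) :
    A.E v (projStratA A hT τ' l) ∧
      τ' (Sum.inr 0 :: l.map Sum.inl) = Sum.inl (projStratA A hT τ' l) := by
  have h1 := hτ' _ _ (isHist_lift (W := W) hl)
    (fun h => hv ((mem_VE_inl (W := W)).1 h))
  rw [edge_inl] at h1
  obtain ⟨v', hE', heq⟩ := h1
  have hval : projStratA A hT τ' l = v' := by
    unfold projStratA
    rw [heq]
  rw [hval]
  exact ⟨hE', heq⟩

lemma projStratA_adamstrat (hT : A.Total) {τ' : List (V ⊕ Fin 4) → V ⊕ Fin 4}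
    (hτ' : (primeArena A W).AdamStrat τ') : A.AdamStrat (projStratA A hT τ') :=
  fun _ _ hl hv => (projStratA_spec hτ' hl hv).1


/-- Raw version of `liftStratE`. -/
noncomputable def liftStratERaw (A : Arena V) (σG : List V → V) :
    List (V ⊕ Fin 4) → V ⊕ Fin 4 := fun l =>
  match l.getLastD (Sum.inr 0) with
  | Sum.inl _ => Sum.inl (σG (projL l))
  | Sum.inr _ => Sum.inl A.init

lemma liftStratERaw_inl {σG : List V → V} {l : List (V ⊕ Fin 4)} {v : V}
    (hl : l.getLastD (Sum.inr 0 : V ⊕ Fin 4) = Sum.inl v) :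
    liftStratERaw A σG l = Sum.inl (σG (projL l)) := by
  unfold liftStratERaw
  split
  · rfl
  · rw [hl] at *; simp_all

lemma liftStratERaw_inr {σG : List V → V} {l : List (V ⊕ Fin 4)} {i : Fin 4}
    (hl : l.getLastD (Sum.inr 0 : V ⊕ Fin 4) = Sum.inr i) :
    liftStratERaw A σG l = Sum.inl A.init := by
  unfold liftStratERaw
  split
  · rw [hl] at *; simp_all
  · rfl

/-- Eve strategy in `G'` that enters `G` and then follows `σG`. -/
noncomputable def liftStratE (A : Arena V) (W : ℝ) (hT' : (primeArena A W).Total)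
    (σG : List V → V) : List (V ⊕ Fin 4) → V ⊕ Fin 4 :=
  (primeArena A W).force hT' (liftStratERaw A σG)

lemma liftStratE_evestrat (hT' : (primeArena A W).Total) (σG : List V → V) :
    (primeArena A W).EveStrat (liftStratE A W hT' σG) :=
  (primeArena A W).evestrat_force hT' _

lemma liftStratE_spec0 (hT' : (primeArena A W).Total) (σG : List V → V) :
    liftStratE A W hT' σG [Sum.inr 0] = Sum.inl A.init := by
  have hraw : liftStratERaw A σG [Sum.inr 0] = Sum.inl A.init :=
    liftStratERaw_inr (i := 0) rfl
  have hedge : (primeArena A W).E (([Sum.inr 0] : List (V ⊕ Fin 4)).getLastD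
      (primeArena A W).init) (liftStratERaw A σG [Sum.inr 0]) := by
    rw [hraw]
    exact Or.inr (Or.inl ⟨rfl, Or.inl rfl⟩)
  unfold liftStratE
  rw [(primeArena A W).force_eq hT' hedge, hraw]

lemma liftStratE_spec (hT' : (primeArena A W).Total) {σG τG : List V → V}
    (hσG : A.EveStrat σG) (hτG : A.AdamStrat τG) (n : ℕ)
    (hn : A.play σG τG n ∈ A.VE) :
    liftStratE A W hT' σG (Sum.inr 0 :: (A.hist σG τG n).map Sum.inl) =
      Sum.inl (σG (A.hist σG τG n)) := by
  have hlast : (Sum.inr 0 :: (A.hist σG τG n).map Sum.inl).getLastD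
      (Sum.inr 0 : V ⊕ Fin 4) = Sum.inl (A.play σG τG n) :=
    getLastD_lift (A.hist_getLast? n) _ _
  have hraw : liftStratERaw A σG (Sum.inr 0 :: (A.hist σG τG n).map Sum.inl) =
      Sum.inl (σG (A.hist σG τG n)) := by
    rw [liftStratERaw_inl hlast, projL_lift]
  have hedge : (primeArena A W).E ((Sum.inr 0 :: (A.hist σG τG n).map Sum.inl).getLastD
      (primeArena A W).init) (liftStratERaw A σG (Sum.inr 0 :: (A.hist σG τG n).map Sum.inl)) := by
    rw [hraw, show (Sum.inr 0 :: (A.hist σG τG n).map Sum.inl).getLastD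
      (primeArena A W).init = Sum.inl (A.play σG τG n) from hlast]
    exact Or.inl ⟨_, _, hσG _ _ (A.isHist_hist hσG hτG n) hn, rfl, rfl⟩
  unfold liftStratE
  rw [(primeArena A W).force_eq hT' hedge, hraw]

/-- Raw version of `liftStratA`. -/
noncomputable def liftStratARaw (A : Arena V) (τG : List V → V) :
    List (V ⊕ Fin 4) → V ⊕ Fin 4 := fun l =>
  match l.getLastD (Sum.inr 0) with
  | Sum.inl _ => Sum.inl (τG (projL l))
  | Sum.inr i => if i = 3 then Sum.inr 3 else Sum.inr 2

lemma liftStratARaw_inl {τG : List V → V} {l : List (V ⊕ Fin 4)} {v : V}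
    (hl : l.getLastD (Sum.inr 0 : V ⊕ Fin 4) = Sum.inl v) :
    liftStratARaw A τG l = Sum.inl (τG (projL l)) := by
  unfold liftStratARaw
  split
  · rfl
  · rw [hl] at *; simp_all

lemma liftStratARaw_inr {τG : List V → V} {l : List (V ⊕ Fin 4)} {i : Fin 4}
    (hl : l.getLastD (Sum.inr 0 : V ⊕ Fin 4) = Sum.inr i) :
    liftStratARaw A τG l = if i = 3 then Sum.inr 3 else Sum.inr 2 := by
  unfold liftStratARaw
  split
  · rw [hl] at *; simp_all
  · rename_i j hj
    rw [hl] at hj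
    injection hj with hj
    rw [hj]

/-- Adam strategy in `G'` following `τG` inside `G` and moving to `d₁` from `c`. -/
noncomputable def liftStratA (A : Arena V) (W : ℝ) (hT' : (primeArena A W).Total)
    (τG : List V → V) : List (V ⊕ Fin 4) → V ⊕ Fin 4 :=
  (primeArena A W).force hT' (liftStratARaw A τG)

lemma liftStratA_adamstrat (hT' : (primeArena A W).Total) (τG : List V → V) :
    (primeArena A W).AdamStrat (liftStratA A W hT' τG) :=
  (primeArena A W).adamstrat_force hT' _

lemma liftStratA_spec (hT' : (primeArena A W).Total) {σG τG : List V → V}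
    (hσG : A.EveStrat σG) (hτG : A.AdamStrat τG) (n : ℕ)
    (hn : A.play σG τG n ∉ A.VE) :
    liftStratA A W hT' τG (Sum.inr 0 :: (A.hist σG τG n).map Sum.inl) =
      Sum.inl (τG (A.hist σG τG n)) := by
  have hlast : (Sum.inr 0 :: (A.hist σG τG n).map Sum.inl).getLastD
      (Sum.inr 0 : V ⊕ Fin 4) = Sum.inl (A.play σG τG n) :=
    getLastD_lift (A.hist_getLast? n) _ _
  have hraw : liftStratARaw A τG (Sum.inr 0 :: (A.hist σG τG n).map Sum.inl) =
      Sum.inl (τG (A.hist σG τG n)) := by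
    rw [liftStratARaw_inl hlast, projL_lift]
  have hedge : (primeArena A W).E ((Sum.inr 0 :: (A.hist σG τG n).map Sum.inl).getLastD
      (primeArena A W).init) (liftStratARaw A τG (Sum.inr 0 :: (A.hist σG τG n).map Sum.inl)) := by
    rw [hraw, show (Sum.inr 0 :: (A.hist σG τG n).map Sum.inl).getLastD
      (primeArena A W).init = Sum.inl (A.play σG τG n) from hlast]
    exact Or.inl ⟨_, _, hτG _ _ (A.isHist_hist hσG hτG n) hn, rfl, rfl⟩
  unfold liftStratA
  rw [(primeArena A W).force_eq hT' hedge, hraw]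

lemma liftStratA_c (hT' : (primeArena A W).Total) (τG : List V → V)
    {l : List (V ⊕ Fin 4)} (hl : l.getLastD (Sum.inr 0 : V ⊕ Fin 4) = Sum.inr 1) :
    liftStratA A W hT' τG l = Sum.inr 2 := by
  have hraw : liftStratARaw A τG l = Sum.inr 2 := by
    rw [liftStratARaw_inr hl, if_neg (by decide)]
  have hedge : (primeArena A W).E (l.getLastD (primeArena A W).init)
      (liftStratARaw A τG l) := by
    rw [hraw, show l.getLastD (primeArena A W).init = Sum.inr 1 from hl]
    exact Or.inr (Or.inr (Or.inl ⟨rfl, Or.inl rfl⟩))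
  unfold liftStratA
  rw [(primeArena A W).force_eq hT' hedge, hraw]

/-- Eve strategy in `G'` moving to `c` immediately. -/
noncomputable def toCStrat (A : Arena V) (W : ℝ) (hT' : (primeArena A W).Total) :
    List (V ⊕ Fin 4) → V ⊕ Fin 4 :=
  (primeArena A W).force hT' fun _ : List (V ⊕ Fin 4) => (Sum.inr 1 : V ⊕ Fin 4)

lemma toCStrat_evestrat (hT' : (primeArena A W).Total) :
    (primeArena A W).EveStrat (toCStrat A W hT') :=
  (primeArena A W).evestrat_force hT' _

lemma toCStrat_spec0 (hT' : (primeArena A W).Total) :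
    toCStrat A W hT' [Sum.inr 0] = Sum.inr 1 := by
  have hedge : (primeArena A W).E (([Sum.inr 0] : List (V ⊕ Fin 4)).getLastD
      (primeArena A W).init) ((fun _ : List (V ⊕ Fin 4) => (Sum.inr 1 : V ⊕ Fin 4)) ([Sum.inr 0] : List (V ⊕ Fin 4))) := by
    exact Or.inr (Or.inl ⟨rfl, Or.inr rfl⟩)
  unfold toCStrat
  rw [(primeArena A W).force_eq hT' hedge]

/-- Raw version of `toD2Strat`. -/
noncomputable def toD2StratRaw : List (V ⊕ Fin 4) → V ⊕ Fin 4 := fun l =>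
  match l.getLastD (Sum.inr 0) with
  | Sum.inl _ => Sum.inr 2
  | Sum.inr i => if i = 1 then Sum.inr 3 else if i = 3 then Sum.inr 3 else Sum.inr 2

lemma toD2StratRaw_inr {l : List (V ⊕ Fin 4)} {i : Fin 4}
    (hl : l.getLastD (Sum.inr 0 : V ⊕ Fin 4) = Sum.inr i) :
    toD2StratRaw l = if i = 1 then Sum.inr 3 else if i = 3 then Sum.inr 3 else Sum.inr 2 := by
  unfold toD2StratRaw
  split
  · rw [hl] at *; simp_all
  · rename_i j hj
    rw [hl] at hj
    injection hj with hj
    rw [hj]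

/-- Adam strategy in `G'` moving to `d₂` from `c`. -/
noncomputable def toD2Strat (A : Arena V) (W : ℝ) (hT' : (primeArena A W).Total) :
    List (V ⊕ Fin 4) → V ⊕ Fin 4 :=
  (primeArena A W).force hT' toD2StratRaw

lemma toD2Strat_adamstrat (hT' : (primeArena A W).Total) :
    (primeArena A W).AdamStrat (toD2Strat A W hT') :=
  (primeArena A W).adamstrat_force hT' _

lemma toD2Strat_c (hT' : (primeArena A W).Total) {l : List (V ⊕ Fin 4)}
    (hl : l.getLastD (Sum.inr 0 : V ⊕ Fin 4) = Sum.inr 1) :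
    toD2Strat A W hT' l = Sum.inr 3 := by
  have hraw : toD2StratRaw l = Sum.inr 3 := by
    rw [toD2StratRaw_inr hl, if_pos rfl]
  have hedge : (primeArena A W).E (l.getLastD (primeArena A W).init) (toD2StratRaw l) := by
    rw [hraw, show l.getLastD (primeArena A W).init = Sum.inr 1 from hl]
    exact Or.inr (Or.inr (Or.inl ⟨rfl, Or.inr rfl⟩))
  unfold toD2Strat
  rw [(primeArena A W).force_eq hT' hedge, hraw]

/-- Eve strategy in `G'` moving into `G` and playing arbitrarily. -/
noncomputable def intoGStratRaw (A : Arena V) (hT : A.Total) :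
    List (V ⊕ Fin 4) → V ⊕ Fin 4 := fun l =>
  match l.getLastD (Sum.inr 0) with
  | Sum.inl v => Sum.inl (hT v).choose
  | Sum.inr _ => Sum.inl A.init

lemma intoGStratRaw_inr {hT : A.Total} {l : List (V ⊕ Fin 4)} {i : Fin 4}
    (hl : l.getLastD (Sum.inr 0 : V ⊕ Fin 4) = Sum.inr i) :
    intoGStratRaw A hT l = Sum.inl A.init := by
  unfold intoGStratRaw
  split
  · rw [hl] at *; simp_all
  · rfl

noncomputable def intoGStrat (A : Arena V) (W : ℝ) (hT' : (primeArena A W).Total)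
    (hT : A.Total) : List (V ⊕ Fin 4) → V ⊕ Fin 4 :=
  (primeArena A W).force hT' (intoGStratRaw A hT)

lemma intoGStrat_evestrat (hT' : (primeArena A W).Total) (hT : A.Total) :
    (primeArena A W).EveStrat (intoGStrat A W hT' hT) :=
  (primeArena A W).evestrat_force hT' _

lemma intoGStrat_spec0 (hT' : (primeArena A W).Total) (hT : A.Total) :
    intoGStrat A W hT' hT [Sum.inr 0] = Sum.inl A.init := by
  have hraw : intoGStratRaw A hT [Sum.inr 0] = Sum.inl A.init :=
    intoGStratRaw_inr (i := 0) rfl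
  have hedge : (primeArena A W).E (([Sum.inr 0] : List (V ⊕ Fin 4)).getLastD
      (primeArena A W).init) (intoGStratRaw A hT [Sum.inr 0]) := by
    rw [hraw]
    exact Or.inr (Or.inl ⟨rfl, Or.inl rfl⟩)
  unfold intoGStrat
  rw [(primeArena A W).force_eq hT' hedge, hraw]

/-- Move through `c`: the second vertex of the play. -/
lemma prime_play_two {σ τ : List (V ⊕ Fin 4) → V ⊕ Fin 4}
    (h1 : (primeArena A W).play σ τ 1 = Sum.inr 1) :
    (primeArena A W).play σ τ 2 = τ ((primeArena A W).hist σ τ 1) := by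
  rw [Arena.play_succ, if_neg]
  rw [h1]
  exact not_mem_VE_inr (by decide)

lemma prime_hist_one_getLastD (σ τ : List (V ⊕ Fin 4) → V ⊕ Fin 4) :
    ((primeArena A W).hist σ τ 1).getLastD (Sum.inr 0 : V ⊕ Fin 4) =
      (primeArena A W).play σ τ 1 := rfl


end PrimeAux

/-- the Claim inside Lemma 3, for mean-payoff. For a
weighted arena `G` with integer weights of maximal absolute value `W`, the
antagonistic mean-payoff value of `G` equals `W + 1` minus the regret of `G'`
under the mean-payoff with both players unrestricted. -/
theorem aVal_eq_W_add_one_sub_regret_prime {V : Type} [Fintype V] (A : Arena V)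
    (htotal : A.Total)
    (hint : ∀ u v, A.E u v → ∃ k : ℤ, A.w u v = (k : ℝ))
    (W : ℝ) (hW : IsGreatest {x : ℝ | ∃ u v, A.E u v ∧ x = |A.w u v|} W) :
    A.aVal A.MPVal = W + 1 - (primeArena A W).regret ((primeArena A W).MPVal) := by
  classical
  have hW0 : 0 ≤ W := by
    obtain ⟨u, v, -, huv⟩ := hW.1
    rw [huv]; positivity
  have hWb : ∀ u v, A.E u v → |A.w u v| ≤ W := fun u v h => hW.2 ⟨u, v, h, rfl⟩
  have hT' : (primeArena A W).Total := prime_total htotal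
  have neA : Nonempty {τ : List V → V // A.AdamStrat τ} :=
    ⟨⟨_, A.adamstrat_any htotal⟩⟩
  have neE : Nonempty {σ : List V → V // A.EveStrat σ} :=
    ⟨⟨_, A.evestrat_any htotal⟩⟩
  have neA' : Nonempty {τ : List (V ⊕ Fin 4) → V ⊕ Fin 4 //
      (primeArena A W).AdamStrat τ ∧ True} :=
    ⟨⟨_, (primeArena A W).adamstrat_any hT', trivial⟩⟩
  have neE' : Nonempty {σ : List (V ⊕ Fin 4) → V ⊕ Fin 4 //
      (primeArena A W).EveStrat σ ∧ True} :=
    ⟨⟨_, (primeArena A W).evestrat_any hT', trivial⟩⟩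
  -- values of plays in `G`
  have hGb : ∀ σ τ : List V → V, A.EveStrat σ → A.AdamStrat τ →
      -W ≤ A.MPVal (A.play σ τ) ∧ A.MPVal (A.play σ τ) ≤ W := by
    intro σ τ hσ hτ
    have hb : ∀ i, |A.w (A.play σ τ i) (A.play σ τ (i + 1))| ≤ W :=
      fun i => hWb _ _ (A.edge_play hσ hτ i)
    exact ⟨A.le_MPVal_of_bound hW0 hb, A.MPVal_le_of_bound hW0 hb⟩
  -- `aVal` facts
  have haVal_eq : A.aVal A.MPVal = ⨆ σ : {σ : List V → V // A.EveStrat σ},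
      ⨅ τ : {τ : List V → V // A.AdamStrat τ}, A.MPVal (A.play σ.1 τ.1) := rfl
  have hbddg : ∀ σ : {σ : List V → V // A.EveStrat σ},
      BddBelow (Set.range fun τ : {τ : List V → V // A.AdamStrat τ} =>
        A.MPVal (A.play σ.1 τ.1)) := by
    intro σ
    refine ⟨-W, ?_⟩
    rintro x ⟨τ, rfl⟩
    exact (hGb _ _ σ.2 τ.2).1
  have hgU : ∀ σ : {σ : List V → V // A.EveStrat σ},
      (⨅ τ : {τ : List V → V // A.AdamStrat τ}, A.MPVal (A.play σ.1 τ.1)) ≤ W := by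
    intro σ
    obtain ⟨τ0⟩ := neA
    exact ciInf_le_of_le (hbddg σ) τ0 (hGb _ _ σ.2 τ0.2).2
  have hgL : ∀ σ : {σ : List V → V // A.EveStrat σ},
      -W ≤ ⨅ τ : {τ : List V → V // A.AdamStrat τ}, A.MPVal (A.play σ.1 τ.1) :=
    fun σ => le_ciInf fun τ => (hGb _ _ σ.2 τ.2).1
  have hbdda : BddAbove (Set.range fun σ : {σ : List V → V // A.EveStrat σ} =>
      ⨅ τ : {τ : List V → V // A.AdamStrat τ}, A.MPVal (A.play σ.1 τ.1)) := by
    refine ⟨W, ?_⟩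
    rintro x ⟨σ, rfl⟩
    exact hgU σ
  have haValL : -W ≤ A.aVal A.MPVal := by
    obtain ⟨σ0⟩ := neE
    rw [haVal_eq]
    exact le_ciSup_of_le hbdda σ0 (hgL σ0)
  -- bounds on values of plays in `G'`
  have hub : ∀ σ τ, (primeArena A W).EveStrat σ → (primeArena A W).AdamStrat τ →
      (primeArena A W).MPVal ((primeArena A W).play σ τ) ≤ W + 1 := by
    intro σ τ hσ hτ
    rcases prime_play_cases hW0 hWb hσ hτ with ⟨_, _, h⟩ | ⟨_, _, h⟩ | ⟨_, _, h⟩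
    · linarith
    · rw [h]
    · rw [h]; linarith
  have hlb : ∀ σ τ, (primeArena A W).EveStrat σ → (primeArena A W).AdamStrat τ →
      -3 * W - 2 ≤ (primeArena A W).MPVal ((primeArena A W).play σ τ) := by
    intro σ τ hσ hτ
    rcases prime_play_cases hW0 hWb hσ hτ with ⟨_, h, _⟩ | ⟨_, _, h⟩ | ⟨_, _, h⟩
    · linarith
    · rw [h]; linarith
    · rw [h]
  -- the regret, unfolded
  have hreg_eq : (primeArena A W).regret ((primeArena A W).MPVal) =
      ⨅ σ' : {σ : List (V ⊕ Fin 4) → V ⊕ Fin 4 // (primeArena A W).EveStrat σ ∧ True},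
        ⨆ τ' : {τ : List (V ⊕ Fin 4) → V ⊕ Fin 4 // (primeArena A W).AdamStrat τ ∧ True},
          ((⨆ σ'' : {σ : List (V ⊕ Fin 4) → V ⊕ Fin 4 // (primeArena A W).EveStrat σ ∧ True},
            (primeArena A W).MPVal ((primeArena A W).play σ''.1 τ'.1)) -
              (primeArena A W).MPVal ((primeArena A W).play σ'.1 τ'.1)) := rfl
  -- inner sup facts
  have hbddT : ∀ τ' : {τ : List (V ⊕ Fin 4) → V ⊕ Fin 4 // (primeArena A W).AdamStrat τ ∧ True},
      BddAbove (Set.range fun σ'' : {σ : List (V ⊕ Fin 4) → V ⊕ Fin 4 //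
          (primeArena A W).EveStrat σ ∧ True} =>
        (primeArena A W).MPVal ((primeArena A W).play σ''.1 τ'.1)) := by
    intro τ'
    refine ⟨W + 1, ?_⟩
    rintro x ⟨σ'', rfl⟩
    exact hub _ _ σ''.2.1 τ'.2.1
  have hTU : ∀ τ' : {τ : List (V ⊕ Fin 4) → V ⊕ Fin 4 // (primeArena A W).AdamStrat τ ∧ True},
      (⨆ σ'' : {σ : List (V ⊕ Fin 4) → V ⊕ Fin 4 // (primeArena A W).EveStrat σ ∧ True},
        (primeArena A W).MPVal ((primeArena A W).play σ''.1 τ'.1)) ≤ W + 1 :=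
    fun τ' => ciSup_le fun σ'' => hub _ _ σ''.2.1 τ'.2.1
  have hbddterm : ∀ σ' : {σ : List (V ⊕ Fin 4) → V ⊕ Fin 4 //
      (primeArena A W).EveStrat σ ∧ True},
      BddAbove (Set.range fun τ' : {τ : List (V ⊕ Fin 4) → V ⊕ Fin 4 //
          (primeArena A W).AdamStrat τ ∧ True} =>
        ((⨆ σ'' : {σ : List (V ⊕ Fin 4) → V ⊕ Fin 4 // (primeArena A W).EveStrat σ ∧ True},
          (primeArena A W).MPVal ((primeArena A W).play σ''.1 τ'.1)) -
            (primeArena A W).MPVal ((primeArena A W).play σ'.1 τ'.1))) := by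
    intro σ'
    refine ⟨(W + 1) - (-3 * W - 2), ?_⟩
    rintro x ⟨τ', rfl⟩
    exact sub_le_sub (hTU τ') (hlb _ _ σ'.2.1 τ'.2.1)
  have hS0 : ∀ σ' : {σ : List (V ⊕ Fin 4) → V ⊕ Fin 4 //
      (primeArena A W).EveStrat σ ∧ True},
      (0:ℝ) ≤ ⨆ τ' : {τ : List (V ⊕ Fin 4) → V ⊕ Fin 4 // (primeArena A W).AdamStrat τ ∧ True},
        ((⨆ σ'' : {σ : List (V ⊕ Fin 4) → V ⊕ Fin 4 // (primeArena A W).EveStrat σ ∧ True},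
          (primeArena A W).MPVal ((primeArena A W).play σ''.1 τ'.1)) -
            (primeArena A W).MPVal ((primeArena A W).play σ'.1 τ'.1)) := by
    intro σ'
    obtain ⟨τ0⟩ := neA'
    refine le_trans ?_ (le_ciSup (hbddterm σ') τ0)
    exact sub_nonneg.2 (le_ciSup (hbddT τ0) σ')
  have hbddS : BddBelow (Set.range fun σ' : {σ : List (V ⊕ Fin 4) → V ⊕ Fin 4 //
      (primeArena A W).EveStrat σ ∧ True} =>
      ⨆ τ' : {τ : List (V ⊕ Fin 4) → V ⊕ Fin 4 // (primeArena A W).AdamStrat τ ∧ True},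
        ((⨆ σ'' : {σ : List (V ⊕ Fin 4) → V ⊕ Fin 4 // (primeArena A W).EveStrat σ ∧ True},
          (primeArena A W).MPVal ((primeArena A W).play σ''.1 τ'.1)) -
            (primeArena A W).MPVal ((primeArena A W).play σ'.1 τ'.1))) := by
    refine ⟨0, ?_⟩
    rintro x ⟨σ', rfl⟩
    exact hS0 σ'
  -- Part 1: regret ≤ W + 1 - aVal + ε
  have part1 : ∀ ε : ℝ, 0 < ε →
      (primeArena A W).regret ((primeArena A W).MPVal) ≤ W + 1 - A.aVal A.MPVal + ε := by
    intro ε hε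
    have hlt : A.aVal A.MPVal - ε < ⨆ σ : {σ : List V → V // A.EveStrat σ},
        ⨅ τ : {τ : List V → V // A.AdamStrat τ}, A.MPVal (A.play σ.1 τ.1) := by
      rw [← haVal_eq]; linarith
    obtain ⟨σG, hσG⟩ := exists_lt_of_lt_ciSup hlt
    have hσAE : (primeArena A W).EveStrat (liftStratE A W hT' σG.1) :=
      liftStratE_evestrat hT' σG.1
    calc (primeArena A W).regret ((primeArena A W).MPVal) ≤
        ⨆ τ' : {τ : List (V ⊕ Fin 4) → V ⊕ Fin 4 // (primeArena A W).AdamStrat τ ∧ True},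
          ((⨆ σ'' : {σ : List (V ⊕ Fin 4) → V ⊕ Fin 4 // (primeArena A W).EveStrat σ ∧ True},
            (primeArena A W).MPVal ((primeArena A W).play σ''.1 τ'.1)) -
              (primeArena A W).MPVal ((primeArena A W).play (liftStratE A W hT' σG.1) τ'.1)) := by
          rw [hreg_eq]
          exact ciInf_le hbddS ⟨liftStratE A W hT' σG.1, hσAE, trivial⟩
      _ ≤ W + 1 - A.aVal A.MPVal + ε := by
          refine ciSup_le fun τ' => ?_
          have hτA : A.AdamStrat (projStratA A htotal τ'.1) :=
            projStratA_adamstrat htotal τ'.2.1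
          have hcor : ∀ n, (primeArena A W).play (liftStratE A W hT' σG.1) τ'.1 (n + 1) =
              Sum.inl (A.play σG.1 (projStratA A htotal τ'.1) n) := by
            refine lift_play σG.2 hτA (liftStratE_spec0 hT' σG.1) ?_ ?_
            · intro n hn
              exact liftStratE_spec hT' σG.2 hτA n hn
            · intro n hn
              exact (projStratA_spec τ'.2.1 (A.isHist_hist σG.2 hτA n) hn).2
          have hval : (primeArena A W).MPVal
              ((primeArena A W).play (liftStratE A W hT' σG.1) τ'.1) =
              A.MPVal (A.play σG.1 (projStratA A htotal τ'.1)) :=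
            lift_MPVal hW0 (fun i => hWb _ _ (A.edge_play σG.2 hτA i)) rfl hcor
          have h1 : A.aVal A.MPVal - ε < A.MPVal (A.play σG.1 (projStratA A htotal τ'.1)) :=
            lt_of_lt_of_le hσG (ciInf_le (hbddg σG) ⟨_, hτA⟩)
          have h2 := hTU τ'
          rw [hval]
          linarith
  -- Part 2: W + 1 - aVal - ε ≤ regret
  have part2 : ∀ ε : ℝ, 0 < ε →
      W + 1 - A.aVal A.MPVal - ε ≤ (primeArena A W).regret ((primeArena A W).MPVal) := by
    intro ε hε
    rw [hreg_eq]
    refine le_ciInf fun σ' => ?_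
    have hhist0 : (primeArena A W).IsHist [Sum.inr 0] (Sum.inr 0) :=
      ⟨List.isChain_singleton _, rfl, rfl⟩
    have hmv := σ'.2.1 _ _ hhist0 mem_VE_inr0
    rw [edge_inr] at hmv
    have hmv' : σ'.1 [Sum.inr 0] = Sum.inl A.init ∨ σ'.1 [Sum.inr 0] = Sum.inr 1 := by
      rcases hmv with ⟨_, h⟩ | ⟨h, _⟩ | ⟨h, _⟩ | ⟨h, _⟩
      · exact h
      all_goals exact absurd h (by decide)
    rcases hmv' with h0 | h0
    · -- Case (i): Eve enters `G`
      have hσGE : A.EveStrat (projStratE A htotal σ'.1) :=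
        projStratE_evestrat htotal σ'.2.1
      have hlt : (⨅ τ : {τ : List V → V // A.AdamStrat τ},
          A.MPVal (A.play (projStratE A htotal σ'.1) τ.1)) < A.aVal A.MPVal + ε := by
        have hle : (⨅ τ : {τ : List V → V // A.AdamStrat τ},
            A.MPVal (A.play (projStratE A htotal σ'.1) τ.1)) ≤ A.aVal A.MPVal := by
          rw [haVal_eq]
          exact le_ciSup hbdda ⟨_, hσGE⟩
        linarith
      obtain ⟨τG, hτG⟩ := exists_lt_of_ciInf_lt hlt
      have hτBA : (primeArena A W).AdamStrat (liftStratA A W hT' τG.1) :=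
        liftStratA_adamstrat hT' τG.1
      have hcor : ∀ n, (primeArena A W).play σ'.1 (liftStratA A W hT' τG.1) (n + 1) =
          Sum.inl (A.play (projStratE A htotal σ'.1) τG.1 n) := by
        refine lift_play hσGE τG.2 h0 ?_ ?_
        · intro n hn
          exact (projStratE_spec σ'.2.1 (A.isHist_hist hσGE τG.2 n) hn).2
        · intro n hn
          exact liftStratA_spec hT' hσGE τG.2 n hn
      have hval : (primeArena A W).MPVal
          ((primeArena A W).play σ'.1 (liftStratA A W hT' τG.1)) =
          A.MPVal (A.play (projStratE A htotal σ'.1) τG.1) :=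
        lift_MPVal hW0 (fun i => hWb _ _ (A.edge_play hσGE τG.2 i)) rfl hcor
      have hplayc : (primeArena A W).MPVal
          ((primeArena A W).play (toCStrat A W hT') (liftStratA A W hT' τG.1)) = W + 1 := by
        have h1 : (primeArena A W).play (toCStrat A W hT') (liftStratA A W hT' τG.1) 1 =
            Sum.inr 1 := by
          rw [prime_play_one]
          exact toCStrat_spec0 hT'
        have h2 : (primeArena A W).play (toCStrat A W hT') (liftStratA A W hT' τG.1) 2 =
            Sum.inr 2 := by
          rw [prime_play_two h1]
          exact liftStratA_c hT' τG.1 h1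
        rcases prime_play_cases hW0 hWb (toCStrat_evestrat hT') hτBA with
          ⟨h, _, _⟩ | ⟨_, _, h⟩ | ⟨_, hh, _⟩
        · rw [h1] at h; exact absurd h (by simp)
        · exact h
        · rw [h2] at hh; exact absurd hh (by simp)
      refine le_trans ?_ (le_ciSup (hbddterm σ') ⟨liftStratA A W hT' τG.1, hτBA, trivial⟩)
      show W + 1 - A.aVal A.MPVal - ε ≤
        (⨆ σ'' : {σ : List (V ⊕ Fin 4) → V ⊕ Fin 4 // (primeArena A W).EveStrat σ ∧ True},
          (primeArena A W).MPVal ((primeArena A W).play σ''.1 (liftStratA A W hT' τG.1))) -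
            (primeArena A W).MPVal ((primeArena A W).play σ'.1 (liftStratA A W hT' τG.1))
      have hsup : W + 1 ≤ ⨆ σ'' : {σ : List (V ⊕ Fin 4) → V ⊕ Fin 4 //
          (primeArena A W).EveStrat σ ∧ True},
          (primeArena A W).MPVal ((primeArena A W).play σ''.1 (liftStratA A W hT' τG.1)) := by
        rw [← hplayc]
        exact le_ciSup (hbddT ⟨liftStratA A W hT' τG.1, hτBA, trivial⟩)
          ⟨toCStrat A W hT', toCStrat_evestrat hT', trivial⟩
      rw [hval]
      linarith
    · -- Case (ii): Eve moves to `c`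
      have hτ2A : (primeArena A W).AdamStrat (toD2Strat A W hT') := toD2Strat_adamstrat hT'
      have h1 : (primeArena A W).play σ'.1 (toD2Strat A W hT') 1 = Sum.inr 1 := by
        rw [prime_play_one]
        exact h0
      have h2 : (primeArena A W).play σ'.1 (toD2Strat A W hT') 2 = Sum.inr 3 := by
        rw [prime_play_two h1]
        exact toD2Strat_c hT' h1
      have hvalσ : (primeArena A W).MPVal
          ((primeArena A W).play σ'.1 (toD2Strat A W hT')) = -3 * W - 2 := by
        rcases prime_play_cases hW0 hWb σ'.2.1 hτ2A with ⟨h, _, _⟩ | ⟨_, hh, _⟩ | ⟨_, _, h⟩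
        · rw [h1] at h; exact absurd h (by simp)
        · rw [h2] at hh; exact absurd hh (by simp)
        · exact h
      have hwit : -W ≤ (primeArena A W).MPVal
          ((primeArena A W).play (intoGStrat A W hT' htotal) (toD2Strat A W hT')) := by
        have h1' : (primeArena A W).play (intoGStrat A W hT' htotal) (toD2Strat A W hT') 1 =
            Sum.inl A.init := by
          rw [prime_play_one]
          exact intoGStrat_spec0 hT' htotal
        rcases prime_play_cases hW0 hWb (intoGStrat_evestrat hT' htotal) hτ2A with
          ⟨_, h, _⟩ | ⟨hh, _, _⟩ | ⟨hh, _, _⟩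
        · exact h
        all_goals (rw [h1'] at hh; exact absurd hh (by simp))
      refine le_trans ?_ (le_ciSup (hbddterm σ') ⟨toD2Strat A W hT', hτ2A, trivial⟩)
      show W + 1 - A.aVal A.MPVal - ε ≤
        (⨆ σ'' : {σ : List (V ⊕ Fin 4) → V ⊕ Fin 4 // (primeArena A W).EveStrat σ ∧ True},
          (primeArena A W).MPVal ((primeArena A W).play σ''.1 (toD2Strat A W hT'))) -
            (primeArena A W).MPVal ((primeArena A W).play σ'.1 (toD2Strat A W hT'))
      have hsup : -W ≤ ⨆ σ'' : {σ : List (V ⊕ Fin 4) → V ⊕ Fin 4 //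
          (primeArena A W).EveStrat σ ∧ True},
          (primeArena A W).MPVal ((primeArena A W).play σ''.1 (toD2Strat A W hT')) :=
        le_trans hwit (le_ciSup (hbddT ⟨toD2Strat A W hT', hτ2A, trivial⟩)
          ⟨intoGStrat A W hT' htotal, intoGStrat_evestrat hT' htotal, trivial⟩)
      rw [hvalσ]
      linarith
  have hreg : (primeArena A W).regret ((primeArena A W).MPVal) = W + 1 - A.aVal A.MPVal := by
    apply le_antisymm
    · refine le_of_forall_pos_le_add fun ε hε => ?_
      have := part1 ε hε
      linarith
    · refine le_of_forall_pos_le_add fun ε hε => ?_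
      have := part2 ε hε
      linarith
  rw [hreg]
  ring
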